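/- Let E be a CPTD map on L(H_i) (acting on the first factor of H_i ⊗ H_i via E ⊗ 𝟙), let Φ_i and ρ_i be density operators on H_i ⊗ H_i with t(E|Φ_i) > 0, and let Φ_o = (E⊗𝟙)[Φ_i]/t(E|Φ_i). Then for every CPTP map E₀ on L(H_i): |t(E|ρ_i) − t(E|Φ_i)| ≤ d·D(Φ_i,Φ₊) + d·t(E|Φ_i)·D(Φ_o, (E₀⊗𝟙)[Φ₊]), where d = dim H_i, D is the trace distance, and Φ₊ is the maximally entangled state. -/

import Mathlib

open Matrix Kronecker MeasureTheory ComplexOrder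

noncomputable section

def msqrt {α : Type*} [Fintype α] [DecidableEq α] (A : Matrix α α ℂ) : Matrix α α ℂ :=
  open scoped Classical in
  if h : A.PosSemidef then
    (h.1.eigenvectorUnitary : Matrix α α ℂ) *
      diagonal (fun i => ((Real.sqrt (h.1.eigenvalues i) : ℝ) : ℂ)) *
      (star h.1.eigenvectorUnitary : Matrix α α ℂ)
  else 0

def fid {α : Type*} [Fintype α] [DecidableEq α] (ρ σ : Matrix α α ℂ) : ℝ :=
  ((msqrt (msqrt ρ * σ * msqrt ρ)).trace).re ^ 2

def sineDist {α : Type*} [Fintype α] [DecidableEq α] (ρ σ : Matrix α α ℂ) : ℝ :=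
  Real.sqrt (1 - fid ρ σ)

def traceDist {α : Type*} [Fintype α] [DecidableEq α] (ρ σ : Matrix α α ℂ) : ℝ :=
  (1/2) * ((msqrt ((ρ - σ)ᴴ * (ρ - σ))).trace).re

def IsDensity {α : Type*} [Fintype α] (ρ : Matrix α α ℂ) : Prop :=
  ρ.PosSemidef ∧ ρ.trace = 1

def IsPureState {α : Type*} [Fintype α] (ρ : Matrix α α ℂ) : Prop :=
  IsDensity ρ ∧ ∃ ψ : α → ℂ, ρ = Matrix.vecMulVec ψ (star ψ)

def tr' {α : Type*} [Fintype α] (A : Matrix α α ℂ) : ℝ := A.trace.re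

def nstate {α : Type*} [Fintype α] (ρ : Matrix α α ℂ) : Matrix α α ℂ :=
  (((tr' ρ : ℝ) : ℂ))⁻¹ • ρ

def IsCPTD {α β : Type*} [Fintype α] [Fintype β] [DecidableEq α] [DecidableEq β]
    (E : Matrix α α ℂ →ₗ[ℂ] Matrix β β ℂ) : Prop :=
  ∃ (k : ℕ) (K : Fin k → Matrix β α ℂ),
    (∀ ρ, E ρ = ∑ i, K i * ρ * (K i)ᴴ) ∧ (1 - ∑ i, (K i)ᴴ * K i).PosSemidef

def IsCPTP {α β : Type*} [Fintype α] [Fintype β] [DecidableEq α] [DecidableEq β]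
    (E : Matrix α α ℂ →ₗ[ℂ] Matrix β β ℂ) : Prop :=
  ∃ (k : ℕ) (K : Fin k → Matrix β α ℂ),
    (∀ ρ, E ρ = ∑ i, K i * ρ * (K i)ᴴ) ∧ (∑ i, (K i)ᴴ * K i = 1)

def tensId {α β γ : Type*} [Fintype α]
    (E : Matrix α α ℂ → Matrix β β ℂ)
    (ρ : Matrix (α × γ) (α × γ) ℂ) : Matrix (β × γ) (β × γ) ℂ :=
  Matrix.of fun p q => E (Matrix.of fun a b => ρ (a, p.2) (b, q.2)) p.1 q.1

def maxEnt (d : ℕ) : Matrix (Fin d × Fin d) (Fin d × Fin d) ℂ :=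
  Matrix.of fun p q => if p.1 = p.2 ∧ q.1 = q.2 then ((d : ℂ))⁻¹ else 0

def ptraceSnd {α β : Type*} [Fintype β] (ρ : Matrix (α × β) (α × β) ℂ) : Matrix α α ℂ :=
  Matrix.of fun a b => ∑ j, ρ (a, j) (b, j)

def ptraceFst {α β : Type*} [Fintype α] (ρ : Matrix (α × β) (α × β) ℂ) : Matrix β β ℂ :=
  Matrix.of fun i j => ∑ a, ρ (a, i) (a, j)

def choiSine {m n : ℕ} (E₁ E₂ : Matrix (Fin m) (Fin m) ℂ →ₗ[ℂ] Matrix (Fin n) (Fin n) ℂ) : ℝ :=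
  sineDist (nstate (tensId (⇑E₁) (maxEnt m))) (nstate (tensId (⇑E₂) (maxEnt m)))

def diamondSine {m n : ℕ} (E₁ E₂ : Matrix (Fin m) (Fin m) ℂ →ₗ[ℂ] Matrix (Fin n) (Fin n) ℂ) : ℝ :=
  sSup { x | ∃ ρ : Matrix (Fin m × Fin m) (Fin m × Fin m) ℂ, IsPureState ρ ∧
    tr' (tensId (⇑E₁) ρ) ≠ 0 ∧ tr' (tensId (⇑E₂) ρ) ≠ 0 ∧
    x = sineDist (nstate (tensId (⇑E₁) ρ)) (nstate (tensId (⇑E₂) ρ)) }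


section MsqrtLemmas

open scoped MatrixOrder

variable {n : Type*} [Fintype n] [DecidableEq n]

private lemma msqrt_eq_sqrt {A : Matrix n n ℂ} (hA : A.PosSemidef) : msqrt A = CFC.sqrt A := by
  rw [msqrt, dif_pos hA, CFC.sqrt_eq_cfc, cfc_nnreal_eq_real _ A hA.nonneg, hA.1.cfc_eq]
  simp only [IsHermitian.cfc, Unitary.conjStarAlgAut_apply, Function.comp_def]
  congr 3
  funext i
  simp [hA.eigenvalues_nonneg i]

private lemma msqrt_psd {A : Matrix n n ℂ} (hA : A.PosSemidef) : (msqrt A).PosSemidef := by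
  rw [msqrt_eq_sqrt hA]; exact (CFC.sqrt_nonneg A).posSemidef

private lemma msqrt_mul_self {A : Matrix n n ℂ} (hA : A.PosSemidef) : msqrt A * msqrt A = A := by
  rw [msqrt_eq_sqrt hA]; exact CFC.sqrt_mul_sqrt_self A hA.nonneg

private lemma eq_msqrt_of_sq_eq {A B : Matrix n n ℂ} (hB : B.PosSemidef) (hA : A.PosSemidef)
    (h : B ^ 2 = A) : B = msqrt A := by
  rw [msqrt_eq_sqrt hA]
  exact (CFC.sqrt_unique (by rw [← sq]; exact h) hB.nonneg).symm

private lemma psd_eq_conjTranspose_mul_self {A : Matrix n n ℂ} (hA : A.PosSemidef) :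
    ∃ M : Matrix n n ℂ, A = Mᴴ * M :=
  ⟨msqrt A, by rw [(msqrt_psd hA).1.eq, msqrt_mul_self hA]⟩

end MsqrtLemmas

section AuxLemmas

open scoped ComplexOrder

variable {n m : Type*} [Fintype n] [DecidableEq n] [Fintype m] [DecidableEq m]

private lemma psd_trace_nonneg {A : Matrix n n ℂ} (hA : A.PosSemidef) : 0 ≤ A.trace := by
  rw [Matrix.trace]
  refine Finset.sum_nonneg fun i _ => ?_
  simpa [dotProduct, Pi.single_apply, Matrix.mulVec] using hA.dotProduct_mulVec_nonneg (Pi.single i 1)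

private lemma psd_mul_trace_nonneg {A B : Matrix n n ℂ} (hA : A.PosSemidef) (hB : B.PosSemidef) :
    0 ≤ (A * B).trace := by
  have h1 : (A * B).trace = (msqrt A * B * (msqrt A)ᴴ).trace := by
    rw [(msqrt_psd hA).1.eq]
    conv_lhs => rw [← msqrt_mul_self hA, Matrix.mul_assoc]
    rw [Matrix.trace_mul_comm, Matrix.mul_assoc]
  rw [h1]
  exact psd_trace_nonneg (hB.mul_mul_conjTranspose_same (msqrt A))

private lemma psd_mul_trace_re_nonneg {A B : Matrix n n ℂ} (hA : A.PosSemidef)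
    (hB : B.PosSemidef) : 0 ≤ ((A * B).trace).re := by
  have := psd_mul_trace_nonneg hA hB
  rw [Complex.le_def] at this; exact this.1

private lemma trace_conj_unitary {U : Matrix n n ℂ} (hUU : Uᴴ * U = 1) (D : Matrix n n ℂ) :
    (U * D * Uᴴ).trace = D.trace := by
  rw [Matrix.trace_mul_cycle, hUU, Matrix.one_mul]

private lemma conj_unitary_mul {U A B : Matrix n n ℂ} (hUU : Uᴴ * U = 1) :
    (U * A * Uᴴ) * (U * B * Uᴴ) = U * (A * B) * Uᴴ := by
  calc (U * A * Uᴴ) * (U * B * Uᴴ) = U * A * (Uᴴ * U) * B * Uᴴ := by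
        simp only [Matrix.mul_assoc]
      _ = U * (A * B) * Uᴴ := by rw [hUU]; simp only [Matrix.mul_one, Matrix.mul_assoc]

/-- Core lemma: for Hermitian traceless `Y` and `0 ≤ P ≤ 1`,
`|Re Tr (Y P)| ≤ (1/2) Tr |Y|`. -/
private lemma herm_trace_mul_le {Y P : Matrix n n ℂ} (hY : Y.IsHermitian) (hTr : Y.trace = 0)
    (hP : P.PosSemidef) (hP1 : ((1 : Matrix n n ℂ) - P).PosSemidef) :
    |((Y * P).trace).re| ≤ (1/2) * ((msqrt (Yᴴ * Y)).trace).re := by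
  set U : Matrix n n ℂ := (hY.eigenvectorUnitary : Matrix n n ℂ) with hUdef
  set e : n → ℝ := hY.eigenvalues with hedef
  have hUU : Uᴴ * U = 1 := by
    rw [hUdef, ← Matrix.star_eq_conjTranspose]
    exact Matrix.UnitaryGroup.star_mul_self _
  have hspec : Y = U * Matrix.diagonal (fun i => ((e i : ℝ) : ℂ)) * Uᴴ := by
    simpa [Matrix.star_eq_conjTranspose, Function.comp_def] using hY.spectral_theorem
  set Yp := U * Matrix.diagonal (fun i => ((max (e i) 0 : ℝ) : ℂ)) * Uᴴ with hYp
  set Ym := U * Matrix.diagonal (fun i => ((max (-(e i)) 0 : ℝ) : ℂ)) * Uᴴ with hYm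
  have hdiagPSD : ∀ f : n → ℝ, (∀ i, 0 ≤ f i) →
      (U * Matrix.diagonal (fun i => ((f i : ℝ) : ℂ)) * Uᴴ).PosSemidef := by
    intro f hf
    exact (Matrix.PosSemidef.diagonal (fun i => by
      simpa using Complex.zero_le_real.2 (hf i))).mul_mul_conjTranspose_same U
  have hYpPSD : Yp.PosSemidef := hdiagPSD _ (fun i => le_max_right _ _)
  have hYmPSD : Ym.PosSemidef := hdiagPSD _ (fun i => le_max_right _ _)
  have hsplit : Y = Yp - Ym := by
    have hfun : (fun i => ((e i : ℝ) : ℂ)) =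
        fun i => (((max (e i) 0 : ℝ) : ℂ) - ((max (-(e i)) 0 : ℝ) : ℂ)) := by
      funext i
      rw [← Complex.ofReal_sub, max_zero_sub_max_neg_zero_eq_self]
    rw [hspec, hYp, hYm, ← Matrix.sub_mul, ← Matrix.mul_sub, Matrix.diagonal_sub, hfun]
  have hpsd : (Yᴴ * Y).PosSemidef := Matrix.posSemidef_conjTranspose_mul_self Y
  have hSpsd : (U * Matrix.diagonal (fun i => ((|e i| : ℝ) : ℂ)) * Uᴴ).PosSemidef :=
    hdiagPSD _ (fun i => abs_nonneg _)
  have hsq : (U * Matrix.diagonal (fun i => ((|e i| : ℝ) : ℂ)) * Uᴴ) ^ 2 = Yᴴ * Y := by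
    rw [pow_two, conj_unitary_mul hUU, hY.eq]
    conv_rhs => rw [hspec, conj_unitary_mul hUU]
    rw [Matrix.diagonal_mul_diagonal, Matrix.diagonal_mul_diagonal]
    have hfun : (fun i => ((|e i| : ℝ) : ℂ) * ((|e i| : ℝ) : ℂ)) =
        fun i => ((e i : ℝ) : ℂ) * ((e i : ℝ) : ℂ) := by
      funext i
      exact_mod_cast congrArg Complex.ofReal (abs_mul_abs_self (e i))
    rw [hfun]
  have hS : msqrt (Yᴴ * Y) = U * Matrix.diagonal (fun i => ((|e i| : ℝ) : ℂ)) * Uᴴ := by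
    exact (eq_msqrt_of_sq_eq hSpsd hpsd hsq).symm
  have htrYp : Yp.trace = ((∑ i, max (e i) 0 : ℝ) : ℂ) := by
    rw [hYp, trace_conj_unitary hUU, Matrix.trace_diagonal]; push_cast; rfl
  have htrYm : Ym.trace = ((∑ i, max (-(e i)) 0 : ℝ) : ℂ) := by
    rw [hYm, trace_conj_unitary hUU, Matrix.trace_diagonal]; push_cast; rfl
  have htrS : (msqrt (Yᴴ * Y)).trace = ((∑ i, |e i| : ℝ) : ℂ) := by
    rw [hS, trace_conj_unitary hUU, Matrix.trace_diagonal]; push_cast; rfl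
  have htrY : (∑ i, e i) = 0 := by
    have h0 : Y.trace = ((∑ i, e i : ℝ) : ℂ) := by
      rw [hspec, trace_conj_unitary hUU, Matrix.trace_diagonal]; push_cast; rfl
    have := hTr
    rw [h0] at this
    exact_mod_cast this
  have hkey : (∑ i, max (e i) 0) = (1/2) * (∑ i, |e i|) ∧
      (∑ i, max (-(e i)) 0) = (1/2) * (∑ i, |e i|) := by
    have h1 : (∑ i, max (e i) 0) + (∑ i, max (-(e i)) 0) = ∑ i, |e i| := by
      rw [← Finset.sum_add_distrib]
      refine Finset.sum_congr rfl fun i _ => ?_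
      rcases le_total 0 (e i) with h | h
      · rw [max_eq_left h, max_eq_right (neg_nonpos.2 h), abs_of_nonneg h]; ring
      · rw [max_eq_right h, max_eq_left (neg_nonneg.2 h), abs_of_nonpos h]; ring
    have h2 : (∑ i, max (e i) 0) - (∑ i, max (-(e i)) 0) = ∑ i, e i := by
      rw [← Finset.sum_sub_distrib]
      exact Finset.sum_congr rfl fun i _ => max_zero_sub_max_neg_zero_eq_self _
    rw [htrY] at h2
    constructor <;> linarith
  have hb : ∀ (Z : Matrix n n ℂ), Z.PosSemidef →
      0 ≤ ((Z * P).trace).re ∧ ((Z * P).trace).re ≤ (Z.trace).re := by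
    intro Z hZ
    refine ⟨psd_mul_trace_re_nonneg hZ hP, ?_⟩
    have h := psd_mul_trace_re_nonneg hZ hP1
    rw [Matrix.mul_sub, Matrix.mul_one, Matrix.trace_sub, Complex.sub_re] at h
    linarith
  have hx : ((Y * P).trace).re = ((Yp * P).trace).re - ((Ym * P).trace).re := by
    rw [hsplit, Matrix.sub_mul, Matrix.trace_sub, Complex.sub_re]
  rw [hx, htrS]
  have hYpb := hb Yp hYpPSD
  have hYmb := hb Ym hYmPSD
  rw [htrYp] at hYpb
  rw [htrYm] at hYmb
  rw [abs_le]
  constructor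
  · have := hYmb.2
    rw [Complex.ofReal_re] at this
    have h2 := hkey.2
    have h0 := hYpb.1
    simp only [Complex.ofReal_re]
    linarith
  · have := hYpb.2
    rw [Complex.ofReal_re] at this
    have h1 := hkey.1
    have h0 := hYmb.1
    simp only [Complex.ofReal_re]
    linarith

private lemma kron_conjTranspose (A : Matrix n n ℂ) (B : Matrix m m ℂ) :
    (A ⊗ₖ B)ᴴ = Aᴴ ⊗ₖ Bᴴ := by
  ext ⟨a, j⟩ ⟨b, j'⟩
  simp [Matrix.conjTranspose_apply, Matrix.kroneckerMap_apply, mul_comm]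

private lemma kron_posSemidef {A : Matrix n n ℂ} {B : Matrix m m ℂ}
    (hA : A.PosSemidef) (hB : B.PosSemidef) : (A ⊗ₖ B).PosSemidef := by
  obtain ⟨M, hM⟩ := psd_eq_conjTranspose_mul_self hA
  obtain ⟨N, hN⟩ := psd_eq_conjTranspose_mul_self hB
  have h : A ⊗ₖ B = (M ⊗ₖ N)ᴴ * (M ⊗ₖ N) := by
    rw [kron_conjTranspose, ← Matrix.mul_kronecker_mul, ← hM, ← hN]
  rw [h]
  exact Matrix.posSemidef_conjTranspose_mul_self _

private lemma one_sub_kron (A : Matrix n n ℂ) (B : Matrix m m ℂ) :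
    (1 : Matrix (n × m) (n × m) ℂ) - A ⊗ₖ B =
      ((1 : Matrix n n ℂ) - A) ⊗ₖ B + (1 : Matrix n n ℂ) ⊗ₖ ((1 : Matrix m m ℂ) - B) := by
  ext ⟨a, j⟩ ⟨b, j'⟩
  simp only [Matrix.sub_apply, Matrix.add_apply, Matrix.kroneckerMap_apply,
    Matrix.one_apply, Prod.mk.injEq]
  by_cases hab : a = b <;> by_cases hjj : j = j' <;> simp [hab, hjj] <;> ring

private lemma one_sub_psd_of_trace_one {A : Matrix n n ℂ} (hA : A.PosSemidef)
    (htr : A.trace = 1) : ((1 : Matrix n n ℂ) - A).PosSemidef := by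
  have hH : A.IsHermitian := hA.1
  set U : Matrix n n ℂ := (hH.eigenvectorUnitary : Matrix n n ℂ) with hU
  have hUU : Uᴴ * U = 1 := by
    rw [hU, ← Matrix.star_eq_conjTranspose]; exact Matrix.UnitaryGroup.star_mul_self _
  have hUU' : U * Uᴴ = 1 := by
    rw [hU, ← Matrix.star_eq_conjTranspose]
    exact Matrix.mem_unitaryGroup_iff.mp (hH.eigenvectorUnitary).2
  have hspec : A = U * Matrix.diagonal (fun i => ((hH.eigenvalues i : ℝ) : ℂ)) * Uᴴ := by
    simpa [Matrix.star_eq_conjTranspose, Function.comp_def] using hH.spectral_theorem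
  have hsum : (∑ i, hH.eigenvalues i) = 1 := by
    have h0 : A.trace = ((∑ i, hH.eigenvalues i : ℝ) : ℂ) := by
      conv_lhs => rw [hspec]
      rw [trace_conj_unitary hUU, Matrix.trace_diagonal]
      push_cast; rfl
    rw [htr] at h0
    exact_mod_cast h0.symm
  have hle : ∀ i, hH.eigenvalues i ≤ 1 := by
    intro i
    have h2 : hH.eigenvalues i ≤ ∑ j, hH.eigenvalues j :=
      Finset.single_le_sum (fun j _ => hA.eigenvalues_nonneg j) (Finset.mem_univ i)
    rw [hsum] at h2
    exact h2
  have h1 : (1 : Matrix n n ℂ) - A =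
      U * Matrix.diagonal (fun i => ((1 - hH.eigenvalues i : ℝ) : ℂ)) * Uᴴ := by
    have hd : (Matrix.diagonal (fun i => ((1 - hH.eigenvalues i : ℝ) : ℂ))) =
        1 - Matrix.diagonal (fun i => ((hH.eigenvalues i : ℝ) : ℂ)) := by
      rw [← Matrix.diagonal_one, Matrix.diagonal_sub]
      congr 1
      funext i
      push_cast
      rfl
    rw [hd, Matrix.mul_sub, Matrix.sub_mul, Matrix.mul_one, hUU']
    conv_lhs => rw [hspec]
  rw [h1]
  refine (Matrix.PosSemidef.diagonal fun i => ?_).mul_mul_conjTranspose_same U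
  have h3 : (0:ℝ) ≤ 1 - hH.eigenvalues i := by linarith [hle i]
  simpa using Complex.zero_le_real.2 h3

private lemma psd_smul {M : Matrix n n ℂ} (hM : M.PosSemidef) {c : ℝ} (hc : 0 ≤ c) :
    ((c : ℂ) • M).PosSemidef := by
  refine Matrix.posSemidef_iff_dotProduct_mulVec.mpr ⟨?_, ?_⟩
  · unfold Matrix.IsHermitian
    rw [Matrix.conjTranspose_smul, hM.1.eq]
    congr 1
    simp [Complex.conj_ofReal]
  · intro x
    rw [Matrix.smul_mulVec, dotProduct_smul]
    exact smul_nonneg (Complex.zero_le_real.2 hc) (hM.dotProduct_mulVec_nonneg x)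

private lemma msqrt_smul_sq {M : Matrix n n ℂ} (hM : M.PosSemidef) {c : ℝ} (hc : 0 ≤ c) :
    msqrt (((c : ℂ) ^ 2) • M) = (c : ℂ) • msqrt M := by
  have hM2 : (((c : ℂ) ^ 2) • M).PosSemidef := by
    rw [show ((c : ℂ) ^ 2) = ((c ^ 2 : ℝ) : ℂ) by push_cast; ring]
    exact psd_smul hM (sq_nonneg c)
  have hS : ((c : ℂ) • msqrt M).PosSemidef := psd_smul (msqrt_psd hM) hc
  refine (eq_msqrt_of_sq_eq hS hM2 ?_).symm
  rw [smul_pow, sq (msqrt M), msqrt_mul_self hM]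

end AuxLemmas

section TensorLemmas

open scoped ComplexOrder

variable {d k : ℕ}

private lemma tensId_kraus (E : Matrix (Fin d) (Fin d) ℂ →ₗ[ℂ] Matrix (Fin d) (Fin d) ℂ)
    (K : Fin k → Matrix (Fin d) (Fin d) ℂ) (hK : ∀ ρ, E ρ = ∑ i, K i * ρ * (K i)ᴴ)
    (ρ : Matrix (Fin d × Fin d) (Fin d × Fin d) ℂ) :
    tensId (⇑E) ρ = ∑ i, (K i ⊗ₖ (1 : Matrix (Fin d) (Fin d) ℂ)) * ρ *
      ((K i)ᴴ ⊗ₖ (1 : Matrix (Fin d) (Fin d) ℂ)) := by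
  ext ⟨p1, p2⟩ ⟨q1, q2⟩
  simp only [tensId, Matrix.of_apply, hK, Matrix.sum_apply, Matrix.mul_apply,
    Matrix.kroneckerMap_apply, Matrix.one_apply, Matrix.conjTranspose_apply,
    Fintype.sum_prod_type, mul_ite, ite_mul, mul_zero, zero_mul, mul_one, one_mul,
    Finset.sum_ite_eq, Finset.sum_ite_eq', Finset.mem_univ, if_true]

private lemma sum_kron (f : Fin k → Matrix (Fin d) (Fin d) ℂ) (P : Matrix (Fin d) (Fin d) ℂ) :
    (∑ i, f i) ⊗ₖ P = ∑ i, (f i ⊗ₖ P) := by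
  ext ⟨a, j⟩ ⟨b, j'⟩
  simp [Matrix.kroneckerMap_apply, Matrix.sum_apply, Finset.sum_mul]

private lemma trace_tensId_kraus (E : Matrix (Fin d) (Fin d) ℂ →ₗ[ℂ] Matrix (Fin d) (Fin d) ℂ)
    (K : Fin k → Matrix (Fin d) (Fin d) ℂ) (hK : ∀ ρ, E ρ = ∑ i, K i * ρ * (K i)ᴴ)
    (ρ : Matrix (Fin d × Fin d) (Fin d × Fin d) ℂ) (P : Matrix (Fin d) (Fin d) ℂ) :
    (tensId (⇑E) ρ * ((1 : Matrix (Fin d) (Fin d) ℂ) ⊗ₖ P)).trace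
      = (ρ * ((∑ i, (K i)ᴴ * K i) ⊗ₖ P)).trace := by
  rw [tensId_kraus E K hK, Finset.sum_mul, Matrix.trace_sum, sum_kron, Finset.mul_sum,
    Matrix.trace_sum]
  refine Finset.sum_congr rfl fun i _ => ?_
  rw [Matrix.mul_assoc, Matrix.mul_assoc,
    show ((K i)ᴴ ⊗ₖ (1 : Matrix (Fin d) (Fin d) ℂ)) * ((1 : Matrix (Fin d) (Fin d) ℂ) ⊗ₖ P)
      = ((K i)ᴴ ⊗ₖ P) by rw [← Matrix.mul_kronecker_mul, Matrix.mul_one, Matrix.one_mul],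
    ← Matrix.mul_assoc, Matrix.trace_mul_comm, ← Matrix.mul_assoc,
    show ((K i)ᴴ ⊗ₖ P) * (K i ⊗ₖ (1 : Matrix (Fin d) (Fin d) ℂ))
      = (((K i)ᴴ * K i) ⊗ₖ P) by rw [← Matrix.mul_kronecker_mul, Matrix.mul_one],
    Matrix.trace_mul_comm]

private lemma trace_maxEnt_mul (M : Matrix (Fin d × Fin d) (Fin d × Fin d) ℂ) :
    (maxEnt d * M).trace = (d : ℂ)⁻¹ * ∑ j, ∑ j', M (j', j') (j, j) := by
  simp only [Matrix.trace, Matrix.diag, Matrix.mul_apply, maxEnt, Matrix.of_apply,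
    Fintype.sum_prod_type, ite_mul, zero_mul, ite_and, Finset.mul_sum]
  rw [Finset.sum_comm]
  simp [Finset.sum_ite_eq, Finset.sum_ite_eq']

private lemma trace_kron_one_eq (G : Matrix (Fin d) (Fin d) ℂ)
    (ρ : Matrix (Fin d × Fin d) (Fin d × Fin d) ℂ) (hd : d ≠ 0) :
    (ρ * (G ⊗ₖ (1 : Matrix (Fin d) (Fin d) ℂ))).trace
      = (d : ℂ) * (maxEnt d * (G ⊗ₖ (ptraceSnd ρ)ᵀ)).trace := by
  rw [trace_maxEnt_mul, ← mul_assoc, mul_inv_cancel₀ (by exact_mod_cast hd), one_mul]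
  simp only [Matrix.trace, Matrix.diag, Matrix.mul_apply, ptraceSnd, Matrix.of_apply,
    Matrix.kroneckerMap_apply, Matrix.one_apply, Matrix.transpose_apply,
    Fintype.sum_prod_type, mul_ite, ite_mul, mul_zero, zero_mul, mul_one, one_mul,
    Finset.sum_ite_eq, Finset.sum_ite_eq', Finset.mem_univ, if_true, Finset.mul_sum]
  refine Finset.sum_congr rfl fun a _ => ?_
  rw [Finset.sum_comm]
  exact Finset.sum_congr rfl fun b _ => Finset.sum_congr rfl fun j _ => mul_comm _ _

private lemma trace_maxEnt_one_kron (σ : Matrix (Fin d) (Fin d) ℂ) :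
    (maxEnt d * ((1 : Matrix (Fin d) (Fin d) ℂ) ⊗ₖ σᵀ)).trace = (d : ℂ)⁻¹ * σ.trace := by
  rw [trace_maxEnt_mul]
  simp [Matrix.kroneckerMap_apply, Matrix.one_apply, Matrix.transpose_apply, Matrix.trace,
    Matrix.diag]

private lemma tensId_kraus_isHermitian
    (E : Matrix (Fin d) (Fin d) ℂ →ₗ[ℂ] Matrix (Fin d) (Fin d) ℂ)
    (K : Fin k → Matrix (Fin d) (Fin d) ℂ) (hK : ∀ ρ, E ρ = ∑ i, K i * ρ * (K i)ᴴ)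
    (ρ : Matrix (Fin d × Fin d) (Fin d × Fin d) ℂ) (hρ : ρ.IsHermitian) :
    (tensId (⇑E) ρ).IsHermitian := by
  rw [tensId_kraus E K hK]
  have h : ∀ i : Fin k, ((K i)ᴴ ⊗ₖ (1 : Matrix (Fin d) (Fin d) ℂ))
      = (K i ⊗ₖ (1 : Matrix (Fin d) (Fin d) ℂ))ᴴ := by
    intro i; rw [kron_conjTranspose, Matrix.conjTranspose_one]
  unfold Matrix.IsHermitian
  rw [Matrix.conjTranspose_sum]
  refine Finset.sum_congr rfl fun i _ => ?_
  rw [h i, Matrix.conjTranspose_mul, Matrix.conjTranspose_mul,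
    Matrix.conjTranspose_conjTranspose, hρ.eq, Matrix.mul_assoc]

private lemma ptraceSnd_trace {α β : Type*} [Fintype α] [Fintype β]
    (ρ : Matrix (α × β) (α × β) ℂ) : (ptraceSnd ρ).trace = ρ.trace := by
  simp [ptraceSnd, Matrix.trace, Matrix.diag, Fintype.sum_prod_type]

private lemma ptraceSnd_posSemidef {α β : Type*} [Fintype α] [Fintype β] [DecidableEq α]
    [DecidableEq β] {ρ : Matrix (α × β) (α × β) ℂ} (hρ : ρ.PosSemidef) :
    (ptraceSnd ρ).PosSemidef := by
  refine Matrix.posSemidef_iff_dotProduct_mulVec.mpr ⟨?_, ?_⟩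
  · unfold Matrix.IsHermitian
    ext a b
    simp only [ptraceSnd, Matrix.conjTranspose_apply, Matrix.of_apply, star_sum]
    exact Finset.sum_congr rfl fun j _ => congrFun (congrFun hρ.1 (a, j)) (b, j)
  · intro x
    have hterm : ∀ j : β, (star (fun p : α × β => if p.2 = j then x p.1 else 0)) ⬝ᵥ
        (ρ *ᵥ (fun p : α × β => if p.2 = j then x p.1 else 0))
        = ∑ a, ∑ b, star (x a) * (ρ (a, j) (b, j) * x b) := by
      intro j
      simp only [dotProduct, Matrix.mulVec, Pi.star_apply, Fintype.sum_prod_type,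
        apply_ite (star : ℂ → ℂ), star_zero, ite_mul, mul_ite, zero_mul, mul_zero,
        Finset.sum_ite_eq, Finset.sum_ite_eq', Finset.mem_univ, if_true]
      simp [Finset.mul_sum, mul_assoc]
    have hmain : (star x) ⬝ᵥ ((ptraceSnd ρ) *ᵥ x)
        = ∑ j : β, ∑ a, ∑ b, star (x a) * (ρ (a, j) (b, j) * x b) := by
      simp only [dotProduct, Matrix.mulVec, ptraceSnd, Matrix.of_apply, Pi.star_apply,
        Finset.sum_mul, Finset.mul_sum]
      calc (∑ a : α, ∑ b : α, ∑ i : β, star (x a) * (ρ (a, i) (b, i) * x b))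
          = ∑ a : α, ∑ i : β, ∑ b : α, star (x a) * (ρ (a, i) (b, i) * x b) :=
            Finset.sum_congr rfl (fun a _ => Finset.sum_comm)
        _ = ∑ j : β, ∑ a : α, ∑ b : α, star (x a) * (ρ (a, j) (b, j) * x b) :=
            Finset.sum_comm
    rw [hmain]
    refine Finset.sum_nonneg fun j _ => ?_
    rw [← hterm j]
    exact hρ.dotProduct_mulVec_nonneg _

private lemma maxEnt_isHermitian (d : ℕ) : (maxEnt d).IsHermitian := by
  unfold Matrix.IsHermitian
  ext ⟨a, j⟩ ⟨b, j'⟩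
  simp only [maxEnt, Matrix.conjTranspose_apply, Matrix.of_apply]
  by_cases h1 : a = b <;> by_cases h2 : j = j' <;>
    simp [h1, h2, and_comm, apply_ite (starRingEnd ℂ), map_inv₀, map_natCast]

private lemma maxEnt_trace (d : ℕ) (hd : d ≠ 0) : (maxEnt d).trace = 1 := by
  simp only [Matrix.trace, Matrix.diag, maxEnt, Matrix.of_apply, Fintype.sum_prod_type,
    and_self]
  simp [Finset.sum_ite_eq, Finset.card_univ, mul_inv_cancel₀,
    (by exact_mod_cast hd : (d : ℂ) ≠ 0)]

private lemma sum_conjTranspose_mul_posSemidef (K : Fin k → Matrix (Fin d) (Fin d) ℂ) :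
    (∑ i, (K i)ᴴ * K i).PosSemidef := by
  refine Finset.sum_induction _ _ (fun a b ha hb => ha.add hb) ?_ ?_
  · constructor
    · simp [Matrix.IsHermitian]
    · intro x; simp
  · exact fun i _ => Matrix.posSemidef_conjTranspose_mul_self _

end TensorLemmas

/-- Bound on the transmissivity difference between two input states. -/
theorem transmissivity_bound {d : ℕ}
    (E : Matrix (Fin d) (Fin d) ℂ →ₗ[ℂ] Matrix (Fin d) (Fin d) ℂ) (hE : IsCPTD E)
    (Φi ρi : Matrix (Fin d × Fin d) (Fin d × Fin d) ℂ)
    (hΦ : IsDensity Φi) (hρ : IsDensity ρi)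
    (ht : 0 < tr' (tensId (⇑E) Φi))
    (E₀ : Matrix (Fin d) (Fin d) ℂ →ₗ[ℂ] Matrix (Fin d) (Fin d) ℂ) (hE₀ : IsCPTP E₀) :
    |tr' (tensId (⇑E) ρi) - tr' (tensId (⇑E) Φi)| ≤
      (d : ℝ) * traceDist Φi (maxEnt d) +
      (d : ℝ) * tr' (tensId (⇑E) Φi) *
        traceDist (nstate (tensId (⇑E) Φi)) (tensId (⇑E₀) (maxEnt d)) := by
  classical
  obtain ⟨k, K, hK, hKbound⟩ := hE
  obtain ⟨k₀, K₀, hK₀, hK₀sum⟩ := hE₀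
  have hd : d ≠ 0 := by
    rintro rfl
    rw [show tr' (tensId (⇑E) Φi) = 0 by simp [tr', Matrix.trace]] at ht
    exact lt_irrefl 0 ht
  have hd0 : (0:ℝ) ≤ (d:ℝ) := Nat.cast_nonneg d
  have hdC : (d:ℂ) ≠ 0 := by exact_mod_cast hd
  set t : ℝ := tr' (tensId (⇑E) Φi) with htdef
  set G : Matrix (Fin d) (Fin d) ℂ := ∑ i, (K i)ᴴ * K i with hGdef
  set σ : Matrix (Fin d) (Fin d) ℂ := ptraceSnd ρi with hσdef
  -- PSD facts
  have hσpsd : σ.PosSemidef := ptraceSnd_posSemidef hρ.1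
  have hσtr : σ.trace = 1 := by rw [hσdef, ptraceSnd_trace]; exact hρ.2
  have hPσ : σᵀ.PosSemidef := hσpsd.transpose
  have h1σ : ((1 : Matrix (Fin d) (Fin d) ℂ) - σᵀ).PosSemidef := by
    have := (one_sub_psd_of_trace_one hσpsd hσtr).transpose
    rwa [Matrix.transpose_sub, Matrix.transpose_one] at this
  have hGpsd : G.PosSemidef := sum_conjTranspose_mul_posSemidef K
  have hG1 : ((1 : Matrix (Fin d) (Fin d) ℂ) - G).PosSemidef := hKbound
  have hP1 : (G ⊗ₖ σᵀ).PosSemidef := kron_posSemidef hGpsd hPσ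
  have hP1' : ((1 : Matrix (Fin d × Fin d) (Fin d × Fin d) ℂ) - G ⊗ₖ σᵀ).PosSemidef := by
    rw [one_sub_kron]
    exact (kron_posSemidef hG1 hPσ).add (kron_posSemidef Matrix.PosSemidef.one h1σ)
  have hP2 : (((1 : Matrix (Fin d) (Fin d) ℂ)) ⊗ₖ σᵀ).PosSemidef :=
    kron_posSemidef Matrix.PosSemidef.one hPσ
  have hP2' : ((1 : Matrix (Fin d × Fin d) (Fin d × Fin d) ℂ)
      - ((1 : Matrix (Fin d) (Fin d) ℂ)) ⊗ₖ σᵀ).PosSemidef := by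
    rw [one_sub_kron, sub_self, Matrix.zero_kronecker, zero_add]
    exact kron_posSemidef Matrix.PosSemidef.one h1σ
  -- Hermitian facts
  have hEHerm : (tensId (⇑E) Φi).IsHermitian := tensId_kraus_isHermitian E K hK Φi hΦ.1.1
  have hE0Herm : (tensId (⇑E₀) (maxEnt d)).IsHermitian :=
    tensId_kraus_isHermitian E₀ K₀ hK₀ (maxEnt d) (maxEnt_isHermitian d)
  -- trace of tensId E Φi is the real number t
  have htc : (tensId (⇑E) Φi).trace = ((t : ℝ) : ℂ) := by
    have hreal : star ((tensId (⇑E) Φi).trace) = (tensId (⇑E) Φi).trace := by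
      rw [← Matrix.trace_conjTranspose, hEHerm.eq]
    refine Complex.ext rfl ?_
    have him := congrArg Complex.im hreal
    rw [Complex.star_def, Complex.conj_im] at him
    simp only [Complex.ofReal_im]
    linarith
  -- trace of tensId E₀ maxEnt is 1
  have htE0 : (tensId (⇑E₀) (maxEnt d)).trace = 1 := by
    have h := trace_tensId_kraus E₀ K₀ hK₀ (maxEnt d) 1
    rw [Matrix.one_kronecker_one, Matrix.mul_one, hK₀sum, Matrix.one_kronecker_one,
      Matrix.mul_one] at h
    rw [h, maxEnt_trace d hd]
  set Y₁ : Matrix (Fin d × Fin d) (Fin d × Fin d) ℂ := maxEnt d - Φi with hY₁def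
  set Y₂ : Matrix (Fin d × Fin d) (Fin d × Fin d) ℂ :=
    tensId (⇑E) Φi - ((t : ℝ) : ℂ) • tensId (⇑E₀) (maxEnt d) with hY₂def
  -- the main algebraic identity
  have hmain : (tensId (⇑E) ρi).trace - ((t : ℝ) : ℂ)
      = (d : ℂ) * ((Y₁ * (G ⊗ₖ σᵀ)).trace
        + (Y₂ * (((1 : Matrix (Fin d) (Fin d) ℂ)) ⊗ₖ σᵀ)).trace) := by
    have e1 : (tensId (⇑E) ρi).trace = (ρi * (G ⊗ₖ (1 : Matrix (Fin d) (Fin d) ℂ))).trace := by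
      have h := trace_tensId_kraus E K hK ρi 1
      rwa [Matrix.one_kronecker_one, Matrix.mul_one] at h
    have e2 := trace_kron_one_eq G ρi hd
    have e3 := trace_tensId_kraus E K hK Φi σᵀ
    have e45 : (tensId (⇑E₀) (maxEnt d)
        * (((1 : Matrix (Fin d) (Fin d) ℂ)) ⊗ₖ σᵀ)).trace = (d : ℂ)⁻¹ := by
      have h := trace_tensId_kraus E₀ K₀ hK₀ (maxEnt d) σᵀ
      rw [hK₀sum] at h
      rw [h, trace_maxEnt_one_kron, hσtr, mul_one]
    have hdinv : (d : ℂ) * (d : ℂ)⁻¹ = 1 := mul_inv_cancel₀ hdC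
    rw [hY₁def, hY₂def, Matrix.sub_mul, Matrix.sub_mul, Matrix.trace_sub, Matrix.trace_sub,
      Matrix.smul_mul, Matrix.trace_smul, smul_eq_mul]
    rw [← hσdef] at e2
    linear_combination e1 + e2 - (d:ℂ)*e3 + (d:ℂ)*((t : ℝ) : ℂ)*e45 + ((t : ℝ) : ℂ)*hdinv
  -- real parts
  have hre : tr' (tensId (⇑E) ρi) - t
      = (d:ℝ) * (((Y₁ * (G ⊗ₖ σᵀ)).trace).re
        + ((Y₂ * (((1 : Matrix (Fin d) (Fin d) ℂ)) ⊗ₖ σᵀ)).trace).re) := by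
    have h := congrArg Complex.re hmain
    simpa [tr', Complex.sub_re, Complex.add_re, Complex.ofReal_re, Complex.mul_re,
      Complex.natCast_re, Complex.natCast_im] using h
  -- bound 1
  have hb1 : |((Y₁ * (G ⊗ₖ σᵀ)).trace).re| ≤ traceDist Φi (maxEnt d) := by
    have hY₁H : Y₁.IsHermitian := (maxEnt_isHermitian d).sub hΦ.1.1
    have hY₁tr : Y₁.trace = 0 := by
      rw [hY₁def, Matrix.trace_sub, maxEnt_trace d hd, hΦ.2, sub_self]
    have h := herm_trace_mul_le hY₁H hY₁tr hP1 hP1'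
    have heq : Y₁ᴴ * Y₁ = (Φi - maxEnt d)ᴴ * (Φi - maxEnt d) := by
      rw [hY₁def, show maxEnt d - Φi = -(Φi - maxEnt d) from (neg_sub _ _).symm,
        Matrix.conjTranspose_neg, Matrix.neg_mul, Matrix.mul_neg, neg_neg]
    rw [heq] at h
    exact h.trans (le_of_eq rfl)
  -- bound 2
  have ht' : t ≠ 0 := ne_of_gt ht
  have htC : ((t : ℝ) : ℂ) ≠ 0 := by exact_mod_cast ht'
  have hb2 : |((Y₂ * (((1 : Matrix (Fin d) (Fin d) ℂ)) ⊗ₖ σᵀ)).trace).re|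
      ≤ t * traceDist (nstate (tensId (⇑E) Φi)) (tensId (⇑E₀) (maxEnt d)) := by
    have hY₂H : Y₂.IsHermitian := by
      refine hEHerm.sub ?_
      unfold Matrix.IsHermitian
      rw [Matrix.conjTranspose_smul, hE0Herm.eq, Complex.star_def, Complex.conj_ofReal]
    have hY₂tr : Y₂.trace = 0 := by
      rw [hY₂def, Matrix.trace_sub, Matrix.trace_smul, htc, htE0, smul_eq_mul, mul_one,
        sub_self]
    have h := herm_trace_mul_le hY₂H hY₂tr hP2 hP2'
    -- rewrite the trace distance
    have hdist : traceDist (nstate (tensId (⇑E) Φi)) (tensId (⇑E₀) (maxEnt d))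
        = t⁻¹ * ((1/2) * ((msqrt (Y₂ᴴ * Y₂)).trace).re) := by
      have hn : nstate (tensId (⇑E) Φi) - tensId (⇑E₀) (maxEnt d)
          = (((t⁻¹ : ℝ) : ℂ)) • Y₂ := by
        rw [nstate, hY₂def, smul_sub, smul_smul, ← htdef]
        push_cast
        rw [inv_mul_cancel₀ htC, one_smul]
      have hprod : (nstate (tensId (⇑E) Φi) - tensId (⇑E₀) (maxEnt d))ᴴ
          * (nstate (tensId (⇑E) Φi) - tensId (⇑E₀) (maxEnt d))
          = (((t⁻¹ : ℝ) : ℂ) ^ 2) • (Y₂ᴴ * Y₂) := by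
        rw [hn, Matrix.conjTranspose_smul, Complex.star_def, Complex.conj_ofReal,
          Matrix.smul_mul, Matrix.mul_smul, smul_smul, pow_two]
      rw [traceDist, hprod, msqrt_smul_sq (Matrix.posSemidef_conjTranspose_mul_self Y₂)
        (inv_nonneg.2 (le_of_lt ht)), Matrix.trace_smul]
      have : ((((t⁻¹ : ℝ) : ℂ)) • (msqrt (Y₂ᴴ * Y₂)).trace).re
          = t⁻¹ * ((msqrt (Y₂ᴴ * Y₂)).trace).re := by
        simp [smul_eq_mul, Complex.mul_re]
      rw [this]
      ring
    rw [hdist, ← mul_assoc, mul_inv_cancel₀ ht', one_mul]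
    exact h
  -- conclude
  rw [hre]
  have habs : |(d:ℝ) * (((Y₁ * (G ⊗ₖ σᵀ)).trace).re
      + ((Y₂ * (((1 : Matrix (Fin d) (Fin d) ℂ)) ⊗ₖ σᵀ)).trace).re)|
      ≤ (d:ℝ) * (|((Y₁ * (G ⊗ₖ σᵀ)).trace).re|
        + |((Y₂ * (((1 : Matrix (Fin d) (Fin d) ℂ)) ⊗ₖ σᵀ)).trace).re|) := by
    rw [abs_mul, Nat.abs_cast]
    exact mul_le_mul_of_nonneg_left (abs_add_le _ _) hd0
  refine habs.trans ?_
  rw [mul_add]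
  have h1 := mul_le_mul_of_nonneg_left hb1 hd0
  have h2 := mul_le_mul_of_nonneg_left hb2 hd0
  rw [show (d:ℝ) * t
      * traceDist (nstate (tensId (⇑E) Φi)) (tensId (⇑E₀) (maxEnt d))
    = (d:ℝ) * (t * traceDist (nstate (tensId (⇑E) Φi)) (tensId (⇑E₀) (maxEnt d)))
    from mul_assoc _ _ _]
  exact add_le_add h1 h2
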